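/- Let p(n) > 0 and r(n) ≥ 0 for n ≥ a. If every solution of Δ(p(n-1)Δu(n-1)) = r(n)u(n) is bounded, then both Σ_{s=a}^{∞} Σ_{τ=a}^{s} r(τ)/p(s) < ∞ and Σ_{s=a}^{∞} 1/p(s) < ∞. -/

import Mathlib

open Finset

noncomputable def patV (p r : ℤ → ℝ) (a : ℤ) : ℕ → ℝ
  | 0 => 0
  | 1 => 1
  | (k+2) => patV p r a (k+1) +
      (p (a-1+k) * (patV p r a (k+1) - patV p r a k) + r (a+k) * patV p r a (k+1)) / p (a+k)

lemma patV_key (p r : ℤ → ℝ) (a : ℤ)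
    (hp : ∀ n : ℤ, a - 1 ≤ n → 0 < p n) (hr : ∀ n : ℤ, a ≤ n → 0 ≤ r n) :
    ∀ k : ℕ, 1 ≤ patV p r a (k+1) ∧ patV p r a k ≤ patV p r a (k+1) ∧
      p (a-1+k) * (patV p r a (k+1) - patV p r a k)
        ≥ p (a-1) + ∑ i ∈ range k, r (a+i) := by
  intro k
  induction k with
  | zero =>
    refine ⟨le_refl _, by norm_num [patV], ?_⟩
    simp [patV]
  | succ k ih =>
    obtain ⟨h1, h2, h3⟩ := ih
    have hpk : 0 < p (a+k) := hp _ (by omega)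
    have hrk : 0 ≤ r (a+k) := hr _ (by omega)
    have hS : 0 ≤ ∑ i ∈ range k, r (a+i) :=
      Finset.sum_nonneg fun i _ => hr _ (by omega)
    have hpa : 0 < p (a-1) := hp _ (by omega)
    have hnum : 0 < p (a-1+k) * (patV p r a (k+1) - patV p r a k)
        + r (a+k) * patV p r a (k+1) := by
      have : 0 ≤ r (a+k) * patV p r a (k+1) := mul_nonneg hrk (by linarith)
      linarith
    have hrec : patV p r a (k+2) = patV p r a (k+1) +
        (p (a-1+k) * (patV p r a (k+1) - patV p r a k) + r (a+k) * patV p r a (k+1)) / p (a+k) := rfl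
    have hstep : patV p r a (k+1) ≤ patV p r a (k+2) := by
      rw [hrec]
      have := div_nonneg hnum.le hpk.le
      linarith
    refine ⟨le_trans h1 hstep, hstep, ?_⟩
    have hidx : (a - 1 + ((k:ℤ)+1)) = a + k := by ring
    have : p (a-1+((k:ℕ)+1:ℕ)) * (patV p r a (k+2) - patV p r a (k+1))
        = p (a-1+k) * (patV p r a (k+1) - patV p r a k) + r (a+k) * patV p r a (k+1) := by
      rw [hrec]
      push_cast
      rw [hidx]
      field_simp
      ring
    rw [Finset.sum_range_succ]
    have hrv : r (a+k) * 1 ≤ r (a+k) * patV p r a (k+1) := by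
      nlinarith
    push_cast at this ⊢
    rw [this]
    linarith

lemma icc_sum (r : ℤ → ℝ) (a : ℤ) (j : ℕ) :
    ∑ τ ∈ Finset.Icc a (a + (j:ℤ)), r τ = ∑ i ∈ Finset.range (j+1), r (a + (i:ℤ)) := by
  induction j with
  | zero => simp
  | succ j ih =>
    rw [Finset.sum_range_succ, ← ih]
    push_cast
    have hset : Finset.Icc a (a+(j:ℤ)+1) = insert (a+(j:ℤ)+1) (Finset.Icc a (a+j)) := by
      ext x; simp only [Finset.mem_Icc, Finset.mem_insert]; omega
    rw [show a + ((j:ℤ)+1) = a + (j:ℤ) + 1 from (add_assoc a _ _).symm,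
      hset, Finset.sum_insert (by simp only [Finset.mem_Icc]; omega)]
    ring

/-- Proposition 5 (Patula): if `p > 0`, `r ≥ 0` and all solutions of
`Δ(p(n-1)Δu(n-1)) = r(n)u(n)` are bounded, then `Σ Σ r(τ)/p(s) < ∞` and `Σ 1/p(s) < ∞`. -/
theorem bounded_solutions_imply_summable (p r : ℤ → ℝ) (a : ℤ)
    (hp : ∀ n : ℤ, a - 1 ≤ n → 0 < p n) (hr : ∀ n : ℤ, a ≤ n → 0 ≤ r n)
    (hbdd : ∀ u : ℤ → ℝ,
      (∀ n : ℤ, a ≤ n →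
        p n * (u (n + 1) - u n) - p (n - 1) * (u n - u (n - 1)) = r n * u n) →
      ∃ C : ℝ, ∀ n : ℤ, a - 1 ≤ n → |u n| ≤ C) :
    Summable (fun j : ℕ => (∑ τ ∈ Finset.Icc a (a + (j : ℤ)), r τ) / p (a + (j : ℤ))) ∧
    Summable (fun j : ℕ => 1 / p (a + (j : ℤ))) := by
  set v := patV p r a with hv
  set u : ℤ → ℝ := fun n => v (n - (a-1)).toNat with hu
  have key := patV_key p r a hp hr
  -- u is a solution
  have hsol : ∀ n : ℤ, a ≤ n →
      p n * (u (n + 1) - u n) - p (n - 1) * (u n - u (n - 1)) = r n * u n := by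
    intro n hn
    set k : ℕ := (n - a).toNat with hk
    have hnk : n = a + k := by omega
    have e2 : (n + 1 - (a-1)).toNat = k + 2 := by omega
    have e1 : (n - (a-1)).toNat = k + 1 := by omega
    have e0 : (n - 1 - (a-1)).toNat = k := by omega
    have hn1 : n - 1 = a - 1 + k := by omega
    simp only [hu, e2, e1, e0]
    have hpk : p (a+k) ≠ 0 := (hp _ (by omega)).ne'
    have hrec : v (k+2) = v (k+1) +
        (p (a-1+k) * (v (k+1) - v k) + r (a+k) * v (k+1)) / p (a+k) := rfl
    rw [hrec, hn1, hnk]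
    field_simp
    ring
  obtain ⟨C, hC⟩ := hbdd u hsol
  have hvC : ∀ m : ℕ, v m ≤ C := by
    intro m
    have h1 := hC (a - 1 + m) (by omega)
    have : ((a - 1 + (m:ℤ)) - (a-1)).toNat = m := by omega
    simp only [hu, this] at h1
    exact le_trans (le_abs_self _) h1
  have hpa : 0 < p (a-1) := hp _ (by omega)
  -- f j bound
  set f : ℕ → ℝ := fun j => (p (a-1) + ∑ i ∈ range (j+1), r (a+i)) / p (a+j) with hf
  have hfnonneg : ∀ j, 0 ≤ f j := by
    intro j
    apply div_nonneg
    · have : 0 ≤ ∑ i ∈ range (j+1), r (a+i) :=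
        Finset.sum_nonneg fun i _ => hr _ (by omega)
      linarith
    · exact (hp (a+j) (by omega)).le
  have hfle : ∀ j : ℕ, f j ≤ v (j+2) - v (j+1) := by
    intro j
    have h3 := (key (j+1)).2.2
    have hidx : (a - 1 + ((j:ℤ)+1)) = a + j := by ring
    push_cast at h3
    rw [hidx] at h3
    rw [hf, div_le_iff₀ (hp (a+j) (by omega))]
    calc p (a-1) + ∑ i ∈ range (j+1), r (a+i) ≤ p (a+j) * (v (j+2) - v (j+1)) := by
          rw [mul_comm] at h3 ⊢; exact h3
      _ = (v (j+2) - v (j+1)) * p (a+j) := by ring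
  have hsum : ∀ N : ℕ, ∑ j ∈ range N, f j ≤ C := by
    intro N
    calc ∑ j ∈ range N, f j ≤ ∑ j ∈ range N, (v (j+2) - v (j+1)) :=
          Finset.sum_le_sum fun j _ => hfle j
      _ = v (N+1) - v 1 := by
          induction N with
          | zero => simp
          | succ N ihN => rw [Finset.sum_range_succ, ihN]; ring
      _ ≤ C := by
          have := hvC (N+1)
          have hv1 : v 1 = 1 := rfl
          rw [hv1]; linarith [(key N).1]
  have hfs : Summable f := summable_of_sum_range_le hfnonneg hsum
  constructor
  · apply Summable.of_nonneg_of_le _ _ hfs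
    · intro j
      apply div_nonneg _ (hp (a+j) (by omega)).le
      exact Finset.sum_nonneg fun τ hτ => hr τ (by simp at hτ; omega)
    · intro j
      rw [icc_sum, hf]
      have hS : 0 ≤ ∑ i ∈ range (j+1), r (a+i) :=
        Finset.sum_nonneg fun i _ => hr _ (by omega)
      rw [div_le_div_iff_of_pos_right (hp (a+j) (by omega))]
      linarith
  · have h2 : Summable (fun j : ℕ => p (a-1) / p (a + (j:ℤ))) := by
      apply Summable.of_nonneg_of_le _ _ hfs
      · intro j
        exact div_nonneg hpa.le (hp _ (by omega)).le
      · intro j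
        rw [hf]
        have hS : 0 ≤ ∑ i ∈ range (j+1), r (a+i) :=
          Finset.sum_nonneg fun i _ => hr _ (by omega)
        rw [div_le_div_iff_of_pos_right (hp (a+j) (by omega))]
        linarith
    have h3 := h2.mul_left (p (a-1))⁻¹
    apply h3.congr
    intro j
    field_simp
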